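/- arXiv:1711.00710 — 3 statements merged into one kernel-verified Lean document; each statement's English description precedes it below -/
import Mathlib

section
/- Let m be a primitive vector of a rank-n lattice M (n ≥ 2), P = M/ℤm, and π : M_ℝ → P_ℝ the induced projection. For any polytopes Q_1,…,Q_{n−1} in M_ℝ, the mixed volume of the segment from 0 to m with the Q_i equals the mixed volume of the projections: MV_M(seg(0,m), Q_1,…,Q_{n−1}) = MV_P(π(Q_1),…,π(Q_{n−1})). -/
open scoped BigOperators Pointwise
open MeasureTheory

/-- The mixed volume of `d` convex bodies, normalized so `MV(Q,…,Q) = d! · μ(Q)`. -/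
noncomputable def mixedVol {d : ℕ} (μ : Measure (Fin d → ℝ))
    (Q : Fin d → Set (Fin d → ℝ)) : ℝ :=
  ∑ S ∈ Finset.univ.powerset.erase (∅ : Finset (Fin d)),
    (-1 : ℝ) ^ (d - S.card) * (μ (∑ i ∈ S, Q i)).toReal

/-- A point of `ℝ^d` lying in the standard lattice `ℤ^d`. -/
def IsLatticePt {d : ℕ} (x : Fin d → ℝ) : Prop := ∀ i, ∃ z : ℤ, x i = (z : ℝ)

open Set

theorem bezout_fin {d : ℕ} (m : Fin d → ℤ) (hg : Finset.univ.gcd m = 1) :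
    ∃ u : Fin d → ℤ, ∑ i, u i * m i = 1 := by
  have h1 : (1 : ℤ) ∈ Ideal.span (Set.range m) := by
    obtain ⟨g, hgI⟩ := (IsPrincipalIdealRing.principal (Ideal.span (Set.range m))).principal
    have hdvd : ∀ i, g ∣ m i := fun i => by
      have : m i ∈ Ideal.span (Set.range m) := Ideal.subset_span (Set.mem_range_self i)
      rw [hgI] at this
      exact Ideal.mem_span_singleton.mp this
    have hg1 : g ∣ 1 := hg ▸ Finset.dvd_gcd (fun i _ => hdvd i)
    rw [hgI]
    exact Ideal.mem_span_singleton.mpr hg1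
  rw [Ideal.span, Submodule.mem_span_range_iff_exists_fun] at h1
  obtain ⟨u, hu⟩ := h1
  exact ⟨u, by simpa [smul_eq_mul] using hu⟩

theorem gcd_one {d : ℕ} (m : Fin d → ℤ) (hm : m ≠ 0)
    (hprim : ∀ (k : ℕ) (m' : Fin d → ℤ), 2 ≤ k → m ≠ (k : ℤ) • m') :
    Finset.univ.gcd m = 1 := by
  set g := Finset.univ.gcd m with hgdef
  have hgnn : 0 ≤ g := by
    have := Finset.normalize_gcd (s := (Finset.univ : Finset (Fin d))) (f := m)
    exact hgdef ▸ Int.nonneg_of_normalize_eq_self this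
  have hdvd : ∀ i, g ∣ m i := fun i => Finset.gcd_dvd (Finset.mem_univ i)
  have hgne : g ≠ 0 := by
    intro h
    apply hm
    funext i
    have := hdvd i
    rw [h, zero_dvd_iff] at this
    simpa using this
  have heq : m = g • (fun i => m i / g) := by
    funext i
    simp only [Pi.smul_apply, smul_eq_mul]
    exact (Int.mul_ediv_cancel' (hdvd i)).symm
  by_contra hne
  have h2 : 2 ≤ g.toNat := by omega
  refine hprim g.toNat (fun i => m i / g) h2 ?_
  rw [Int.toNat_of_nonneg hgnn]
  exact heq

theorem cc_real (s : Set ℝ) (hs : IsCompact s) (hc : Convex ℝ s) (hne : s.Nonempty) :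
    s = Set.Icc (sInf s) (sSup s) := by
  apply Set.Subset.antisymm
  · intro x hx
    exact ⟨csInf_le hs.bddBelow hx, le_csSup hs.bddAbove hx⟩
  · exact hc.ordConnected.out (hs.sInf_mem hne) (hs.sSup_mem hne)

theorem prod_seg_vol {k : ℕ} (K : Set (ℝ × (Fin k → ℝ))) (hK : IsCompact K) (hc : Convex ℝ K) :
    volume (Set.Icc (0:ℝ) 1 ×ˢ ({0} : Set (Fin k → ℝ)) + K)
      = volume K + volume (Prod.snd '' K) := by
  have hA : IsCompact (Set.Icc (0:ℝ) 1 ×ˢ ({0} : Set (Fin k → ℝ)) + K) :=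
    (isCompact_Icc.prod isCompact_singleton).add hK
  have hAm := hA.measurableSet
  have hKm := hK.measurableSet
  have hSm : MeasurableSet (Prod.snd '' K) := (hK.image continuous_snd).measurableSet
  have hslice : ∀ y : Fin k → ℝ, (fun t => (t, y)) ⁻¹' (Set.Icc (0:ℝ) 1 ×ˢ ({0} : Set (Fin k → ℝ)) + K)
      = Set.Icc (0:ℝ) 1 + ((fun t => (t, y)) ⁻¹' K) := by
    intro y
    ext t
    simp only [Set.mem_preimage, Set.mem_add]
    constructor
    · rintro ⟨a, ha, b, hb, hab⟩
      obtain ⟨ha1, ha2⟩ := ha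
      refine ⟨a.1, ha1, b.1, ?_, ?_⟩
      · have h2 : a.2 + b.2 = y := congrArg Prod.snd hab
        have h1 : b.2 = y := by
          rw [Set.mem_singleton_iff] at ha2
          rw [ha2, zero_add] at h2; exact h2
        show (b.1, y) ∈ K
        rw [← h1]
        exact hb
      · exact congrArg Prod.fst hab
    · rintro ⟨a, ha, b, hb, hab⟩
      exact ⟨(a, 0), ⟨ha, rfl⟩, (b, y), hb, by simp [Prod.ext_iff, hab]⟩
  have hval : ∀ y : Fin k → ℝ,
      volume ((fun t => (t, y)) ⁻¹' (Set.Icc (0:ℝ) 1 ×ˢ ({0} : Set (Fin k → ℝ)) + K))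
        = volume ((fun t => (t, y)) ⁻¹' K) + (Prod.snd '' K).indicator 1 y := by
    intro y
    rw [hslice y]
    set Ky := (fun t => (t, y)) ⁻¹' K with hKydef
    rcases eq_empty_or_nonempty Ky with hemp | hne
    · have hy : y ∉ Prod.snd '' K := by
        rintro ⟨⟨t, y'⟩, hmem, rfl⟩
        have ht : t ∈ Ky := hmem
        rw [hemp] at ht
        exact ht
      rw [hemp, Set.add_empty]
      simp [hy]
    · have hKyc : IsCompact Ky := by
        apply Metric.isCompact_of_isClosed_isBounded
        · exact hK.isClosed.preimage (continuous_id.prodMk continuous_const)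
        · have : Ky ⊆ Prod.fst '' K := fun t ht => ⟨(t, y), ht, rfl⟩
          exact ((hK.image continuous_fst).isBounded).subset this
      have hKyconv : Convex ℝ Ky := by
        intro t1 ht1 t2 ht2 a b ha hb hab
        have := hc ht1 ht2 ha hb hab
        have hy : a • ((t1, y) : ℝ × (Fin k → ℝ)) + b • (t2, y) = (a • t1 + b • t2, y) := by
          simp [Prod.ext_iff, Convex.combo_self hab]
        rw [hy] at this
        exact this
      have hy : y ∈ Prod.snd '' K := by
        obtain ⟨t, ht⟩ := hne
        exact ⟨(t, y), ht, rfl⟩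
      have hab : sInf Ky ≤ sSup Ky := by
        obtain ⟨t, ht⟩ := hne
        exact le_trans (csInf_le hKyc.bddBelow ht) (le_csSup hKyc.bddAbove ht)
      rw [cc_real Ky hKyc hKyconv hne, Set.Icc_add_Icc zero_le_one hab,
        Real.volume_Icc, Real.volume_Icc]
      rw [Set.indicator_of_mem hy, Pi.one_apply]
      rw [← ENNReal.ofReal_one, ← ENNReal.ofReal_add (by linarith) zero_le_one]
      congr 1
      ring
  rw [show (volume : Measure (ℝ × (Fin k → ℝ))) = (volume : Measure ℝ).prod volume from rfl]
  rw [Measure.prod_apply_symm hAm, Measure.prod_apply_symm hKm]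
  calc ∫⁻ y, volume ((fun t => (t, y)) ⁻¹' (Set.Icc (0:ℝ) 1 ×ˢ ({0} : Set (Fin k → ℝ)) + K)) ∂volume
      = ∫⁻ y, (volume ((fun t => (t, y)) ⁻¹' K) + (Prod.snd '' K).indicator 1 y) ∂volume := by
        exact lintegral_congr hval
    _ = (∫⁻ y, volume ((fun t => (t, y)) ⁻¹' K) ∂volume) + ∫⁻ y, (Prod.snd '' K).indicator 1 y ∂volume := by
        exact lintegral_add_left (measurable_measure_prodMk_right hKm) _
    _ = (∫⁻ y, volume ((fun t => (t, y)) ⁻¹' K) ∂volume) + volume (Prod.snd '' K) := by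
        rw [lintegral_indicator_one hSm]

theorem det_int_mat {N : ℕ} (M : Matrix (Fin N) (Fin N) ℝ)
    (h : ∀ i j, ∃ z : ℤ, M i j = (z : ℝ)) : ∃ z : ℤ, M.det = (z : ℝ) := by
  choose z hz using h
  refine ⟨(Matrix.of z).det, ?_⟩
  have : M = (Matrix.of z).map (Int.cast : ℤ → ℝ) := by
    ext i j
    exact hz i j
  rw [this]
  exact (RingHom.map_det (Int.castRingHom ℝ) (Matrix.of z)).symm

set_option maxHeartbeats 1000000 in
theorem key {n : ℕ} (m : Fin (n + 2) → ℤ)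
    (u : Fin (n + 2) → ℤ) (hu : ∑ i, u i * m i = 1)
    (π : (Fin (n + 2) → ℝ) →ₗ[ℝ] (Fin (n + 1) → ℝ))
    (hker : LinearMap.ker π = Submodule.span ℝ {fun i => (m i : ℝ)})
    (hlat : π '' {x | IsLatticePt x} = {y | IsLatticePt y})
    (K : Set (Fin (n + 2) → ℝ)) (hKc : IsCompact K) (hKconv : Convex ℝ K) :
    volume (segment ℝ 0 (fun i => (m i : ℝ)) + K) = volume K + volume (π '' K) := by
  set mR : Fin (n + 2) → ℝ := fun i => (m i : ℝ) with hmR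
  -- the linear functional λ
  set lam : (Fin (n + 2) → ℝ) →ₗ[ℝ] ℝ := ∑ i, (u i : ℝ) • LinearMap.proj i with hlamdef
  have hlam_apply : ∀ x, lam x = ∑ i, (u i : ℝ) * x i := by
    intro x
    rw [hlamdef]
    simp [LinearMap.sum_apply, LinearMap.proj]
  have hlam_m : lam mR = 1 := by
    rw [hlam_apply]
    rw [hmR]
    push_cast
    exact_mod_cast congrArg (Int.cast : ℤ → ℝ) hu
  have hlam_int : ∀ x : Fin (n + 2) → ℝ, IsLatticePt x → ∃ z : ℤ, lam x = (z : ℝ) := by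
    intro x hx
    choose v hv using hx
    refine ⟨∑ i, u i * v i, ?_⟩
    rw [hlam_apply]
    push_cast
    exact Finset.sum_congr rfl fun i _ => by rw [hv i]
  have hπm : π mR = 0 := by
    have : mR ∈ LinearMap.ker π := by
      rw [hker]
      exact Submodule.mem_span_singleton_self _
    exact LinearMap.mem_ker.mp this
  -- the endomorphism Ψ
  set Ψ : (Fin (n + 2) → ℝ) →ₗ[ℝ] (Fin (n + 2) → ℝ) :=
    LinearMap.pi (fun j : Fin (n + 2) =>
      Fin.cases lam (fun j' => (LinearMap.proj j') ∘ₗ π) j) with hΨdef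
  have hΨ0 : ∀ x, Ψ x 0 = lam x := by
    intro x; rw [hΨdef]; simp [LinearMap.pi_apply]
  have hΨs : ∀ x (j : Fin (n + 1)), Ψ x j.succ = π x j := by
    intro x j; rw [hΨdef]; simp [LinearMap.pi_apply]
  -- injective
  have hinj : Function.Injective Ψ := by
    rw [injective_iff_map_eq_zero]
    intro x hx
    have hπx : π x = 0 := by
      funext j
      rw [← hΨs x j, hx]
      rfl
    have hxk : x ∈ LinearMap.ker π := LinearMap.mem_ker.mpr hπx
    rw [hker, Submodule.mem_span_singleton] at hxk
    obtain ⟨c, hc⟩ := hxk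
    have hlx : lam x = 0 := by rw [← hΨ0 x, hx]; rfl
    rw [← hc, LinearMap.map_smul, hlam_m, smul_eq_mul, mul_one] at hlx
    rw [← hc, hlx, zero_smul]
  have hsurj : Function.Surjective Ψ := LinearMap.injective_iff_surjective.mp hinj
  -- lattice preservation
  have hπlat : ∀ x : Fin (n + 2) → ℝ, IsLatticePt x → IsLatticePt (π x) := by
    intro x hx
    have : π x ∈ π '' {x | IsLatticePt x} := ⟨x, hx, rfl⟩
    rw [hlat] at this
    exact this
  have hΨlat : ∀ x : Fin (n + 2) → ℝ, IsLatticePt x → IsLatticePt (Ψ x) := by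
    intro x hx j
    induction j using Fin.cases with
    | zero => rw [hΨ0]; exact hlam_int x hx
    | succ j => rw [hΨs]; exact hπlat x hx j
  have hΨlat_surj : ∀ w : Fin (n + 2) → ℝ, IsLatticePt w →
      ∃ x : Fin (n + 2) → ℝ, IsLatticePt x ∧ Ψ x = w := by
    intro w hw
    obtain ⟨z0, hz0⟩ := hw 0
    have htail : IsLatticePt (fun j : Fin (n + 1) => w j.succ) := fun j => hw j.succ
    have : (fun j : Fin (n + 1) => w j.succ) ∈ π '' {x | IsLatticePt x} := by
      rw [hlat]; exact htail
    obtain ⟨x, hxlat, hx⟩ := this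
    obtain ⟨z1, hz1⟩ := hlam_int x hxlat
    refine ⟨x + ((z0 : ℝ) - (z1 : ℝ)) • mR, ?_, ?_⟩
    · intro i
      obtain ⟨v, hv⟩ := hxlat i
      refine ⟨v + (z0 - z1) * m i, ?_⟩
      simp only [Pi.add_apply, Pi.smul_apply, smul_eq_mul, hv, hmR]
      push_cast
      ring
    · funext j
      induction j using Fin.cases with
      | zero =>
        rw [hΨ0, map_add, LinearMap.map_smul, hz1, hlam_m, hz0]
        simp
      | succ j =>
        rw [hΨs, map_add, LinearMap.map_smul, hπm, hx]
        simp
  -- determinant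
  have hstd_lat : ∀ j : Fin (n + 2), IsLatticePt (fun j' => if j' = j then (1:ℝ) else 0) := by
    intro j j'
    exact ⟨if j' = j then 1 else 0, by split <;> simp_all⟩
  set ΨL := LinearEquiv.ofBijective Ψ ⟨hinj, hsurj⟩ with hΨLdef
  have hΨLapp : ∀ x, ΨL x = Ψ x := fun _ => rfl
  set A := LinearMap.toMatrix' Ψ with hA
  set B := LinearMap.toMatrix' (ΨL.symm : (Fin (n + 2) → ℝ) →ₗ[ℝ] (Fin (n + 2) → ℝ)) with hB
  have hAB : A * B = 1 := by
    rw [hA, hB, ← LinearMap.toMatrix'_comp, ← LinearMap.toMatrix'_id (R := ℝ) (n := Fin (n+2))]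
    congr 1
    apply LinearMap.ext
    intro x
    simp only [LinearMap.comp_apply, LinearMap.id_apply, LinearEquiv.coe_coe]
    rw [← hΨLapp (ΨL.symm x), LinearEquiv.apply_symm_apply]
  have hAint : ∀ i j, ∃ z : ℤ, A i j = (z : ℝ) := by
    intro i j
    rw [hA, LinearMap.toMatrix'_apply, show (Pi.single j (1:ℝ) : Fin (n+2) → ℝ) = fun j' => if j' = j then (1:ℝ) else 0 from funext fun j' => by simp [Pi.single_apply]]
    exact hΨlat _ (hstd_lat j) i
  have hBint : ∀ i j, ∃ z : ℤ, B i j = (z : ℝ) := by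
    intro i j
    rw [hB, LinearMap.toMatrix'_apply, show (Pi.single j (1:ℝ) : Fin (n+2) → ℝ) = fun j' => if j' = j then (1:ℝ) else 0 from funext fun j' => by simp [Pi.single_apply]]
    obtain ⟨x, hxlat, hx⟩ := hΨlat_surj _ (hstd_lat j)
    have : ΨL.symm (fun j' => if j' = j then (1:ℝ) else 0) = x := by
      apply ΨL.injective
      rw [LinearEquiv.apply_symm_apply, hΨLapp, hx]
    rw [LinearEquiv.coe_coe, this]
    exact hxlat i
  obtain ⟨za, hza⟩ := det_int_mat A hAint
  obtain ⟨zb, hzb⟩ := det_int_mat B hBint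
  have hzazb : za * zb = 1 := by
    have : A.det * B.det = 1 := by rw [← Matrix.det_mul, hAB, Matrix.det_one]
    rw [hza, hzb] at this
    exact_mod_cast this
  have hdetA : |A.det| = 1 := by
    rw [hza]
    rcases Int.isUnit_iff.mp (IsUnit.of_mul_eq_one (a := za) zb hzazb) with h | h <;>
      rw [h] <;> simp
  have hdetΨ : |LinearMap.det Ψ| = 1 := by
    rw [← LinearMap.det_toMatrix' Ψ]
    exact hdetA
  -- measure preservation of Ψ
  have hcontΨ : Continuous Ψ := Ψ.continuous_of_finiteDimensional
  have hdetne : LinearMap.det Ψ ≠ 0 := by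
    intro h
    rw [h, abs_zero] at hdetΨ
    exact zero_ne_one hdetΨ
  have hmap : Measure.map Ψ volume = volume := by
    rw [Real.map_linearMap_volume_pi_eq_smul_volume_pi hdetne, abs_inv, hdetΨ]
    simp
  have hvolΨ : ∀ s : Set (Fin (n + 2) → ℝ), IsCompact s → volume (Ψ '' s) = volume s := by
    intro s hs
    have h1 : MeasurableSet (Ψ '' s) := (hs.image hcontΨ).measurableSet
    calc volume (Ψ '' s) = Measure.map Ψ volume (Ψ '' s) := by rw [hmap]
      _ = volume (Ψ ⁻¹' (Ψ '' s)) := Measure.map_apply hcontΨ.measurable h1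
      _ = volume s := by rw [Set.preimage_image_eq s hinj]
  -- transfer to the product space
  set e := MeasurableEquiv.piFinSuccAbove (fun _ : Fin (n + 2) => ℝ) 0 with hedef
  have he : MeasurePreserving e := volume_preserving_piFinSuccAbove _ 0
  set Φ : (Fin (n + 2) → ℝ) →ₗ[ℝ] ℝ × (Fin (n + 1) → ℝ) := LinearMap.prod lam π with hΦdef
  have hΦapp : ∀ x, Φ x = (lam x, π x) := fun _ => rfl
  have heΨ : ∀ x, e (Ψ x) = Φ x := by
    intro x
    have h1 : e (Ψ x) = (Ψ x 0, fun j => Ψ x ((0 : Fin (n + 2)).succAbove j)) := rfl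
    rw [h1, hΦapp]
    refine Prod.ext ?_ ?_
    · exact hΨ0 x
    · funext j
      simp only []
      rw [Fin.succAbove_zero]
      exact hΨs x j
  have hcontΦ : Continuous Φ := Φ.continuous_of_finiteDimensional
  have hvolΦ : ∀ s : Set (Fin (n + 2) → ℝ), IsCompact s → volume (Φ '' s) = volume s := by
    intro s hs
    have hcomp : ⇑e ∘ ⇑Ψ = ⇑Φ := funext heΨ
    have himg : Φ '' s = e '' (Ψ '' s) := by rw [← Set.image_comp, hcomp]
    rw [himg, MeasurableEquiv.image_eq_preimage_symm]
    rw [(he.symm e).measure_preimage (hs.image hcontΨ).measurableSet.nullMeasurableSet]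
    exact hvolΨ s hs
  -- the segment
  set seg := segment ℝ (0 : Fin (n + 2) → ℝ) mR with hsegdef
  have hsegc : IsCompact seg := by
    rw [hsegdef, ← convexHull_pair]
    exact (Set.Finite.insert _ (Set.finite_singleton _)).isCompact_convexHull (𝕜 := ℝ)
  have hseg_img : Φ '' seg = Set.Icc (0:ℝ) 1 ×ˢ ({0} : Set (Fin (n + 1) → ℝ)) := by
    have h1 : Φ '' seg = segment ℝ (Φ 0) (Φ mR) := by
      rw [hsegdef]
      have := image_segment ℝ Φ.toAffineMap 0 mR
      simpa using this
    have h2 : Φ mR = ((1 : ℝ), (0 : Fin (n + 1) → ℝ)) := by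
      rw [hΦapp, hlam_m, hπm]
    rw [h1, map_zero, h2]
    ext p
    constructor
    · rintro ⟨a, b, ha, hb, hab, habp⟩
      have hp : p = (b, 0) := by
        rw [← habp]
        simp [Prod.ext_iff]
      rw [hp]
      exact ⟨⟨hb, by linarith⟩, rfl⟩
    · rintro ⟨h1', h2'⟩
      refine ⟨1 - p.1, p.1, by linarith [h1'.2], h1'.1, by ring, ?_⟩
      simp only [Set.mem_singleton_iff] at h2'
      simp [Prod.ext_iff, h2']
  -- conclude
  calc volume (seg + K)
      = volume (Φ '' (seg + K)) := (hvolΦ _ (hsegc.add hKc)).symm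
    _ = volume (Φ '' seg + Φ '' K) := by rw [Set.image_add]
    _ = volume (Set.Icc (0:ℝ) 1 ×ˢ ({0} : Set (Fin (n + 1) → ℝ)) + Φ '' K) := by rw [hseg_img]
    _ = volume (Φ '' K) + volume (Prod.snd '' (Φ '' K)) :=
        prod_seg_vol (Φ '' K) (hKc.image hcontΦ) (hKconv.linear_image Φ)
    _ = volume K + volume (π '' K) := by
        rw [hvolΦ K hKc, ← Set.image_comp]
        rfl

theorem vol_zero_singleton {d : ℕ} (hd : d ≠ 0) (x : Fin d → ℝ) :
    volume ({x} : Set (Fin d → ℝ)) = 0 := by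
  have h1 : ({x} : Set (Fin d → ℝ)) = Set.pi Set.univ (fun i => {x i}) := by
    rw [Set.univ_pi_singleton]
  rw [h1, volume_pi_pi]
  rw [Finset.prod_eq_zero (Finset.mem_univ ⟨0, Nat.pos_of_ne_zero hd⟩)]
  exact Real.volume_singleton

theorem sum_sets_props {d k : ℕ} (Q : Fin k → Set (Fin d → ℝ))
    (hc : ∀ i, IsCompact (Q i)) (hconv : ∀ i, Convex ℝ (Q i)) (hne : ∀ i, (Q i).Nonempty)
    (T : Finset (Fin k)) :
    IsCompact (∑ i ∈ T, Q i) ∧ Convex ℝ (∑ i ∈ T, Q i) ∧ (∑ i ∈ T, Q i).Nonempty := by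
  classical
  induction T using Finset.induction with
  | empty =>
    simp only [Finset.sum_empty]
    refine ⟨?_, ?_, ?_⟩
    · rw [show (0 : Set (Fin d → ℝ)) = {0} from rfl]; exact isCompact_singleton
    · rw [show (0 : Set (Fin d → ℝ)) = {0} from rfl]; exact convex_singleton 0
    · exact ⟨0, rfl⟩
  | insert _ _ h ih =>
    rename_i a T'
    rw [Finset.sum_insert h]
    exact ⟨(hc a).add ih.1, (hconv a).add ih.2.1, (hne a).add ih.2.2⟩

theorem image_finset_sum {d k l : ℕ} (f : (Fin d → ℝ) →ₗ[ℝ] (Fin l → ℝ))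
    (Q : Fin k → Set (Fin d → ℝ)) (T : Finset (Fin k)) :
    f '' (∑ i ∈ T, Q i) = ∑ i ∈ T, f '' Q i := by
  classical
  induction T using Finset.induction with
  | empty =>
    simp only [Finset.sum_empty]
    rw [show (0 : Set (Fin d → ℝ)) = {0} from rfl, Set.image_singleton, map_zero]
    rfl
  | insert _ _ h ih =>
    rename_i a T'
    rw [Finset.sum_insert h, Finset.sum_insert h, Set.image_add, ih]

/-- Let `m` be a primitive vector of the rank-`n` lattice `M = ℤ^n` (`n ≥ 2`), and let
`π : M_ℝ → P_ℝ` realize the quotient lattice `P = M/ℤm` (a rank `n−1` lattice): `π` is a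
linear map with kernel `ℝm` mapping the lattice `ℤ^n` onto `ℤ^{n−1}`.  For any (nonempty)
polytopes `Q_1,…,Q_{n−1}` in `M_ℝ`:
`MV_M(seg(0,m), Q_1,…,Q_{n−1}) = MV_P(π(Q_1),…,π(Q_{n−1}))`,
both mixed volumes taken with respect to the lattice-normalized Haar measures. -/
theorem stmt5 {n : ℕ} (m : Fin (n + 2) → ℤ) (hm : m ≠ 0)
    (hprim : ∀ (k : ℕ) (m' : Fin (n + 2) → ℤ), 2 ≤ k → m ≠ (k : ℤ) • m')
    (π : (Fin (n + 2) → ℝ) →ₗ[ℝ] (Fin (n + 1) → ℝ))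
    (hker : LinearMap.ker π = Submodule.span ℝ {fun i => (m i : ℝ)})
    (hlat : π '' {x | IsLatticePt x} = {y | IsLatticePt y})
    (Q : Fin (n + 1) → Set (Fin (n + 2) → ℝ))
    (hQ : ∀ i, ∃ s : Finset (Fin (n + 2) → ℝ), Q i = convexHull ℝ ↑s)
    (hQne : ∀ i, (Q i).Nonempty) :
    mixedVol volume (Fin.cons (segment ℝ 0 (fun i => (m i : ℝ))) Q)
      = mixedVol volume (fun i => π '' Q i) := by
  classical
  have hgcd : Finset.univ.gcd m = 1 := gcd_one m hm hprim
  obtain ⟨u, hu⟩ : ∃ u : Fin (n + 2) → ℤ, ∑ i, u i * m i = 1 := bezout_fin m hgcd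
  have hQc : ∀ i, IsCompact (Q i) := fun i => by
    obtain ⟨s, hs⟩ := hQ i; rw [hs]; exact s.finite_toSet.isCompact_convexHull (𝕜 := ℝ)
  have hQconv : ∀ i, Convex ℝ (Q i) := fun i => by
    obtain ⟨s, hs⟩ := hQ i; rw [hs]; exact convex_convexHull ℝ _
  have hsum := sum_sets_props Q hQc hQconv hQne
  have hkey := fun T : Finset (Fin (n + 1)) =>
    key m u hu π hker hlat (∑ i ∈ T, Q i) (hsum T).1 (hsum T).2.1
  have hcontπ : Continuous π := π.continuous_of_finiteDimensional
  set seg := segment ℝ (0 : Fin (n + 2) → ℝ) (fun i => (m i : ℝ)) with hsegdef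
  set R : Fin (n + 2) → Set (Fin (n + 2) → ℝ) := Fin.cons seg Q with hRdef
  set f : Finset (Fin (n + 2)) → ℝ :=
    fun S => (-1 : ℝ) ^ (n + 2 - S.card) * (volume (∑ i ∈ S, R i)).toReal with hfdef
  set g : Finset (Fin (n + 1)) → ℝ :=
    fun T => (-1 : ℝ) ^ (n + 1 - T.card) * (volume (∑ i ∈ T, π '' Q i)).toReal with hgdef
  -- abbreviations
  set v : Finset (Fin (n + 1)) → ℝ := fun T => (volume (∑ i ∈ T, Q i)).toReal with hvdef
  set p : Finset (Fin (n + 1)) → ℝ :=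
    fun T => (volume (π '' (∑ i ∈ T, Q i))).toReal with hpdef
  have himg : ∀ T : Finset (Fin (n + 1)), π '' (∑ i ∈ T, Q i) = ∑ i ∈ T, π '' Q i :=
    image_finset_sum π Q
  have hg : ∀ T, g T = (-1 : ℝ) ^ (n + 1 - T.card) * p T := by
    intro T; rw [hgdef, hpdef]; simp only [himg T]
  -- extension of mixedVol sums to the full powerset
  have hLHS : mixedVol volume R = ∑ S ∈ Finset.univ.powerset, f S := by
    rw [mixedVol, ← Finset.sum_erase_add _ f
      (Finset.mem_powerset.mpr (Finset.empty_subset _))]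
    have : f ∅ = 0 := by
      rw [hfdef]
      simp only [Finset.sum_empty, Finset.card_empty]
      rw [show (0 : Set (Fin (n + 2) → ℝ)) = {0} from rfl, vol_zero_singleton (by omega)]
      simp
    rw [this, add_zero]
  have hRHS : mixedVol volume (fun i => π '' Q i) = ∑ T ∈ Finset.univ.powerset, g T := by
    rw [mixedVol, ← Finset.sum_erase_add _ g
      (Finset.mem_powerset.mpr (Finset.empty_subset _))]
    have : g ∅ = 0 := by
      rw [hgdef]
      simp only [Finset.sum_empty, Finset.card_empty]
      rw [show (0 : Set (Fin (n + 1) → ℝ)) = {0} from rfl, vol_zero_singleton (by omega)]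
      simp
    rw [this, add_zero]
  -- reindexing
  set embS : Fin (n + 1) ↪ Fin (n + 2) := ⟨Fin.succ, Fin.succ_injective _⟩ with hembS
  have h0notin : ∀ T : Finset (Fin (n + 1)), (0 : Fin (n + 2)) ∉ T.map embS := by
    intro T h
    obtain ⟨j, _, hj⟩ := Finset.mem_map.mp h
    exact Fin.succ_ne_zero j hj
  have huniv : (Finset.univ : Finset (Fin (n + 2))) = insert 0 (Finset.univ.map embS) := by
    ext i
    simp only [Finset.mem_univ, true_iff, Finset.mem_insert, Finset.mem_map]
    induction i using Fin.cases with
    | zero => left; rfl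
    | succ j => right; exact ⟨j, trivial, rfl⟩
  have hsplit : ∑ S ∈ Finset.univ.powerset, f S
      = (∑ S ∈ ((Finset.univ : Finset (Fin (n + 1))).map embS).powerset, f S)
        + ∑ S ∈ ((Finset.univ : Finset (Fin (n + 1))).map embS).powerset, f (insert 0 S) := by
    rw [huniv]
    exact Finset.sum_powerset_insert (h0notin Finset.univ) f
  have hps : ((Finset.univ : Finset (Fin (n + 1))).map embS).powerset
      = Finset.univ.powerset.map
        ⟨fun T : Finset (Fin (n + 1)) => T.map embS,
          fun a b hab => Finset.map_injective embS hab⟩ := by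
    ext S
    simp only [Finset.mem_powerset, Finset.mem_map, Function.Embedding.coeFn_mk]
    constructor
    · intro h
      obtain ⟨T, hT, hTS⟩ := Finset.subset_map_iff.mp h
      exact ⟨T, Finset.subset_univ T, hTS.symm⟩
    · rintro ⟨T, _, rfl⟩
      exact Finset.map_subset_map.mpr (Finset.subset_univ T)
  -- per-T computations
  have hcard : ∀ T : Finset (Fin (n + 1)), (T.map embS).card = T.card :=
    fun T => Finset.card_map _
  have hRsum : ∀ T : Finset (Fin (n + 1)), ∑ i ∈ T.map embS, R i = ∑ j ∈ T, Q j := by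
    intro T
    rw [Finset.sum_map]
    refine Finset.sum_congr rfl fun j _ => ?_
    show R (embS j) = Q j
    simp only [hRdef, hembS, Function.Embedding.coeFn_mk, Fin.cons_succ]
  have hTle : ∀ T : Finset (Fin (n + 1)), T.card ≤ n + 1 := fun T => by
    simpa using Finset.card_le_univ T
  have hsign : ∀ T : Finset (Fin (n + 1)),
      ((-1 : ℝ)) ^ (n + 2 - T.card) = -((-1 : ℝ)) ^ (n + 1 - T.card) := by
    intro T
    have h : n + 2 - T.card = (n + 1 - T.card) + 1 := by have := hTle T; omega
    rw [h, pow_succ]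
    ring
  have hf1 : ∀ T : Finset (Fin (n + 1)),
      f (T.map embS) = -((-1 : ℝ)) ^ (n + 1 - T.card) * v T := by
    intro T
    show (-1 : ℝ) ^ (n + 2 - (T.map embS).card) * (volume (∑ i ∈ T.map embS, R i)).toReal = _
    rw [hcard T, hRsum T, hsign T]
  have hf2 : ∀ T : Finset (Fin (n + 1)),
      f (insert 0 (T.map embS)) = ((-1 : ℝ)) ^ (n + 1 - T.card) * (v T + p T) := by
    intro T
    have hcard2 : (insert 0 (T.map embS)).card = T.card + 1 := by
      rw [Finset.card_insert_of_notMem (h0notin T), hcard T]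
    have hsum2 : ∑ i ∈ insert 0 (T.map embS), R i = seg + ∑ j ∈ T, Q j := by
      rw [Finset.sum_insert (h0notin T), hRsum T]
      simp only [hRdef, Fin.cons_zero]
    show (-1 : ℝ) ^ (n + 2 - (insert 0 (T.map embS)).card)
        * (volume (∑ i ∈ insert 0 (T.map embS), R i)).toReal = _
    rw [hcard2, hsum2]
    have harith : n + 2 - (T.card + 1) = n + 1 - T.card := by omega
    rw [harith, hkey T,
      ENNReal.toReal_add ((hsum T).1.measure_lt_top.ne)
        (((hsum T).1.image hcontπ).measure_lt_top.ne)]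
  rw [hLHS, hRHS, hsplit, hps, Finset.sum_map, Finset.sum_map, ← Finset.sum_add_distrib]
  refine Finset.sum_congr rfl fun T _ => ?_
  show f (T.map embS) + f (insert 0 (T.map embS)) = g T
  rw [hf1 T, hf2 T, hg T]
  ring
end

section
/- For a polytope Q in ℝ^n (n ≥ 2) and the unit vertical segment S = {0}^{n−1} × [0,1], the n-dimensional volume satisfies vol_n(S + Q) − vol_n(Q) = vol_{n−1}(π(Q)), where π : ℝ^n → ℝ^{n−1} is the projection forgetting the last coordinate. -/
open scoped BigOperators Pointwise
open MeasureTheory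
open scoped ENNReal

lemma vol_Icc_add_compact {K : Set ℝ} (hK : IsCompact K) (hconv : Convex ℝ K)
    (hne : K.Nonempty) : volume (Set.Icc (0:ℝ) 1 + K) = volume K + 1 := by
  have hK' : K = Set.Icc (sInf K) (sSup K) :=
    eq_Icc_of_connected_compact ⟨hne, hconv.isPreconnected⟩ hK
  set a := sInf K
  set b := sSup K
  have hab : a ≤ b := by
    rcases hne with ⟨x, hx⟩
    rw [hK'] at hx
    exact hx.1.trans hx.2
  rw [hK', Set.Icc_add_Icc (by norm_num) hab, Real.volume_Icc, Real.volume_Icc]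
  rw [show (1:ℝ) + b - (0 + a) = (b - a) + 1 by ring,
    ENNReal.ofReal_add (by linarith) (by norm_num), ENNReal.ofReal_one]

/-- For a (nonempty) polytope `Q` in `ℝ^n` with `n ≥ 2`, and the unit vertical segment
`S = {0}^{n−1} × [0,1]`, one has `vol_n(S + Q) − vol_n(Q) = vol_{n−1}(π(Q))` where
`π : ℝ^n → ℝ^{n−1}` forgets the last coordinate.  (Here `ℝ^n` is modelled as
`Fin (n+1) → ℝ` with `n ≥ 1`, so the ambient dimension is at least `2`.) -/
theorem stmt6 {n : ℕ} (hn : 1 ≤ n) (Q : Set (Fin (n + 1) → ℝ))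
    (hQ : ∃ s : Finset (Fin (n + 1) → ℝ), Q = convexHull ℝ ↑s) (hQne : Q.Nonempty) :
    (volume ({x : Fin (n + 1) → ℝ |
          (∀ i : Fin n, x i.castSucc = 0) ∧ x (Fin.last n) ∈ Set.Icc (0 : ℝ) 1} + Q)).toReal
        - (volume Q).toReal
      = (volume ((fun (x : Fin (n + 1) → ℝ) (i : Fin n) => x i.castSucc) '' Q)).toReal := by
  classical
  set π : (Fin (n+1) → ℝ) → (Fin n → ℝ) := fun x i => x i.castSucc with hπdef
  set S : Set (Fin (n+1) → ℝ) := {x | (∀ i : Fin n, x i.castSucc = 0) ∧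
      x (Fin.last n) ∈ Set.Icc (0:ℝ) 1} with hSdef
  -- basic insertNth facts
  have hins_cast : ∀ (t : ℝ) (y : Fin n → ℝ) (j : Fin n),
      Fin.insertNth (α := fun _ => ℝ) (Fin.last n) t y (Fin.castSucc j) = y j := by
    intro t y j
    rw [← Fin.succAbove_last_apply]
    exact Fin.insertNth_apply_succAbove (α := fun _ => ℝ) (Fin.last n) t y j
  have hins_last : ∀ (t : ℝ) (y : Fin n → ℝ),
      Fin.insertNth (α := fun _ => ℝ) (Fin.last n) t y (Fin.last n) = t := fun t y =>
    Fin.insertNth_apply_same _ _ _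
  have hrecon : ∀ x : Fin (n+1) → ℝ,
      Fin.insertNth (α := fun _ => ℝ) (Fin.last n) (x (Fin.last n)) (π x) = x := by
    intro x; funext i
    refine Fin.lastCases ?_ ?_ i
    · exact hins_last _ _
    · intro j; exact hins_cast _ _ j
  -- compactness and convexity
  have hQc : IsCompact Q := by
    obtain ⟨s, rfl⟩ := hQ; exact s.finite_toSet.isCompact_convexHull ℝ
  have hQconv : Convex ℝ Q := by
    obtain ⟨s, rfl⟩ := hQ; exact convex_convexHull ℝ _
  have hπcont : Continuous π := continuous_pi fun i => continuous_apply _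
  have hπQc : IsCompact (π '' Q) := hQc.image hπcont
  have hScompact : IsCompact S := by
    have : S = (fun t : ℝ => Fin.insertNth (α := fun _ => ℝ) (Fin.last n) t (fun _ => (0:ℝ))) ''
        Set.Icc (0:ℝ) 1 := by
      ext x
      constructor
      · rintro ⟨hx0, hx1⟩
        refine ⟨x (Fin.last n), hx1, ?_⟩
        have : (fun _ => (0:ℝ)) = π x := by funext j; exact (hx0 j).symm
        rw [this]; exact hrecon x
      · rintro ⟨t, ht, rfl⟩
        refine ⟨fun j => hins_cast _ _ j, ?_⟩
        show Fin.insertNth (α := fun _ => ℝ) (Fin.last n) t (fun _ => (0:ℝ)) (Fin.last n) ∈ Set.Icc (0:ℝ) 1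
        rw [hins_last]; exact ht
    rw [this]
    exact isCompact_Icc.image (by
      refine continuous_pi fun i => ?_
      refine Fin.lastCases ?_ ?_ i
      · simpa only [hins_last] using continuous_id'
      · intro j; simpa only [hins_cast] using continuous_const)
  have hSQc : IsCompact (S + Q) := hScompact.add hQc
  -- slices
  set sl : Set (Fin (n+1) → ℝ) → (Fin n → ℝ) → Set ℝ :=
    fun A y => {t : ℝ | Fin.insertNth (α := fun _ => ℝ) (Fin.last n) t y ∈ A} with hsldef
  have hslS : ∀ y, sl (S + Q) y = Set.Icc (0:ℝ) 1 + sl Q y := by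
    intro y
    ext t
    constructor
    · rintro hmem
      obtain ⟨a, ha, b, hb, hab⟩ := Set.mem_add.mp hmem
      have hπb : π b = y := by
        funext j
        have := congrFun hab (Fin.castSucc j)
        simp only [Pi.add_apply, hins_cast, ha.1 j, zero_add] at this
        exact this
      have hblast : b (Fin.last n) ∈ sl Q y := by
        show Fin.insertNth (α := fun _ => ℝ) (Fin.last n) (b (Fin.last n)) y ∈ Q
        rw [← hπb, hrecon]; exact hb
      have hlast : a (Fin.last n) + b (Fin.last n) = t := by
        have := congrFun hab (Fin.last n)
        simpa only [Pi.add_apply, hins_last] using this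
      exact Set.mem_add.mpr ⟨a (Fin.last n), ha.2, b (Fin.last n), hblast, hlast⟩
    · rintro hmem
      obtain ⟨u, hu, v, hv, huv⟩ := Set.mem_add.mp hmem
      have ha : Fin.insertNth (α := fun _ => ℝ) (Fin.last n) u (fun _ => (0:ℝ)) ∈ S :=
        ⟨fun j => hins_cast _ _ j, by rw [hins_last]; exact hu⟩
      refine Set.mem_add.mpr ⟨_, ha, _, hv, ?_⟩
      funext i
      refine Fin.lastCases ?_ ?_ i
      · simp only [Pi.add_apply, hins_last]; exact huv
      · intro j; simp only [Pi.add_apply, hins_cast, zero_add]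
  have hne_iff : ∀ y, (sl Q y).Nonempty ↔ y ∈ π '' Q := by
    intro y
    constructor
    · rintro ⟨t, ht⟩
      exact ⟨_, ht, by funext j; exact hins_cast _ _ j⟩
    · rintro ⟨x, hx, rfl⟩
      exact ⟨x (Fin.last n), by show _ ∈ Q; rw [hrecon]; exact hx⟩
  have hconv_sl : ∀ y, Convex ℝ (sl Q y) := by
    intro y t₁ ht₁ t₂ ht₂ a b ha hb hab
    show Fin.insertNth (α := fun _ => ℝ) (Fin.last n) (a • t₁ + b • t₂) y ∈ Q
    have : Fin.insertNth (α := fun _ => ℝ) (Fin.last n) (a • t₁ + b • t₂) y =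
        a • Fin.insertNth (α := fun _ => ℝ) (Fin.last n) t₁ y + b • Fin.insertNth (α := fun _ => ℝ) (Fin.last n) t₂ y := by
      funext i
      refine Fin.lastCases ?_ ?_ i
      · simp only [Pi.add_apply, Pi.smul_apply, hins_last]
      · intro j
        simp only [Pi.add_apply, Pi.smul_apply, hins_cast, smul_eq_mul, ← add_mul, hab,
          one_mul]
    rw [this]
    exact hQconv ht₁ ht₂ ha hb hab
  have hcomp_sl : ∀ y, IsCompact (sl Q y) := by
    intro y
    have hclosed : IsClosed (sl Q y) := by
      have : Continuous fun t : ℝ => Fin.insertNth (α := fun _ => ℝ) (Fin.last n) t y := by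
        refine continuous_pi fun i => ?_
        refine Fin.lastCases ?_ ?_ i
        · simpa only [hins_last] using continuous_id'
        · intro j; simpa only [hins_cast] using continuous_const
      exact hQc.isClosed.preimage this
    have hsub : sl Q y ⊆ (fun x : Fin (n+1) → ℝ => x (Fin.last n)) '' Q := by
      intro t ht
      exact ⟨_, ht, hins_last _ _⟩
    exact (hQc.image (continuous_apply _)).of_isClosed_subset hclosed hsub
  -- the Fubini-type identity
  set T := MeasurableEquiv.piFinSuccAbove (fun _ : Fin (n+1) => ℝ) (Fin.last n) with hT
  have hTmp := volume_preserving_piFinSuccAbove (fun _ : Fin (n+1) => ℝ) (Fin.last n)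
  have key : ∀ A : Set (Fin (n+1) → ℝ), MeasurableSet A →
      volume A = ∫⁻ y, volume (sl A y) := by
    intro A hA
    have h1 : volume A = (volume.prod volume) (T.symm ⁻¹' A) := by
      have := hTmp.measure_preimage_equiv (T.symm ⁻¹' A)
      have h2 : T ⁻¹' (T.symm ⁻¹' A) = A := by
        ext x; simp
      rw [h2] at this
      exact this
    rw [h1, Measure.prod_apply_symm (T.symm.measurable hA)]
    congr 1
  -- pointwise slice volume identity
  have hpt : ∀ y, volume (sl (S + Q) y)
      = volume (sl Q y) + Set.indicator (π '' Q) (fun _ => (1:ℝ≥0∞)) y := by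
    intro y
    rw [hslS y]
    by_cases hy : y ∈ π '' Q
    · rw [Set.indicator_of_mem hy]
      exact vol_Icc_add_compact (hcomp_sl y) (hconv_sl y) ((hne_iff y).mpr hy)
    · have hempty : sl Q y = ∅ := by
        rw [← Set.not_nonempty_iff_eq_empty]
        exact fun h => hy ((hne_iff y).mp h)
      rw [hempty, Set.add_empty, Set.indicator_of_notMem hy]
      simp
  -- put it together
  have hmain : volume (S + Q) = volume Q + volume (π '' Q) := by
    rw [key _ hSQc.isClosed.measurableSet]
    calc ∫⁻ y, volume (sl (S + Q) y)
        = ∫⁻ y, (volume (sl Q y) + Set.indicator (π '' Q) (fun _ => (1:ℝ≥0∞)) y) :=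
          lintegral_congr hpt
      _ = (∫⁻ y, volume (sl Q y)) + ∫⁻ y, Set.indicator (π '' Q) (fun _ => (1:ℝ≥0∞)) y :=
          lintegral_add_right _ (measurable_const.indicator hπQc.isClosed.measurableSet)
      _ = volume Q + volume (π '' Q) := by
          rw [← key Q hQc.isClosed.measurableSet,
            lintegral_indicator hπQc.isClosed.measurableSet _, setLIntegral_one]
  have hfinQ : volume Q ≠ ⊤ := hQc.measure_lt_top.ne
  have hfinπ : volume (π '' Q) ≠ ⊤ := hπQc.measure_lt_top.ne
  show (volume (S + Q)).toReal - (volume Q).toReal = (volume (π '' Q)).toReal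
  rw [hmain, ENNReal.toReal_add hfinQ hfinπ]
  ring
end

section
/- Over an archimedean field (ℂ with the usual absolute value), the only boundary of the tropical fiber trop^{−1}(u) ⊆ (ℂ*)^n is trop^{−1}(u) itself: for every point z̃ of the real torus {z : −log|z_i| = u_i for all i}, there exists a polynomial f (namely f = ∏_i (T_i + z̃_i)) such that |f(z)| attains its maximum on trop^{−1}(u) exactly at z = z̃. -/
open scoped BigOperators

/-- The point `z̃ = (e^{−u_1+iθ_1},…,e^{−u_n+iθ_n})` of the tropical fiber `trop⁻¹(u)`. -/
noncomputable def ztilde {n : ℕ} (u θ : Fin n → ℝ) : Fin n → ℂ :=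
  fun i => Complex.exp (-(u i : ℂ) + (θ i : ℂ) * Complex.I)

lemma prod_eq_forall_eq {n : ℕ} (f g : Fin n → ℝ) (hf : ∀ i, 0 ≤ f i)
    (hg : ∀ i, 0 < g i) (hle : ∀ i, f i ≤ g i)
    (h : ∏ i, f i = ∏ i, g i) : ∀ i, f i = g i := by
  by_contra hcon
  push_neg at hcon
  obtain ⟨j, hj⟩ := hcon
  have hjlt : f j < g j := lt_of_le_of_ne (hle j) hj
  have h1 : ∏ i, f i = f j * ∏ i ∈ Finset.univ.erase j, f i := by
    rw [Finset.mul_prod_erase _ _ (Finset.mem_univ j)]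
  have h2 : ∏ i, g i = g j * ∏ i ∈ Finset.univ.erase j, g i := by
    rw [Finset.mul_prod_erase _ _ (Finset.mem_univ j)]
  have hpe : ∏ i ∈ Finset.univ.erase j, f i ≤ ∏ i ∈ Finset.univ.erase j, g i :=
    Finset.prod_le_prod (fun i _ => hf i) (fun i _ => hle i)
  have hpg : 0 < ∏ i ∈ Finset.univ.erase j, g i :=
    Finset.prod_pos (fun i _ => hg i)
  have : ∏ i, f i < ∏ i, g i := by
    rw [h1, h2]
    calc f j * ∏ i ∈ Finset.univ.erase j, f i
        ≤ f j * ∏ i ∈ Finset.univ.erase j, g i :=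
          mul_le_mul_of_nonneg_left hpe (hf j)
      _ < g j * ∏ i ∈ Finset.univ.erase j, g i :=
          mul_lt_mul_of_pos_right hjlt hpg
  exact absurd h this.ne

/-- In the archimedean case the only boundary of the tropical fiber
`trop⁻¹(u) = {z ∈ (ℂ*)^n : |z_i| = e^{−u_i}}` is the whole fiber: for every point
`z̃ = (e^{−u_1+iθ_1},…,e^{−u_n+iθ_n})` of the fiber there is a polynomial — namely
`f = ∏_i (T_i + z̃_i)` — such that `|f(z)|` on the fiber attains its maximum exactly at
`z = z̃`. -/
theorem stmt9 {n : ℕ} (u θ : Fin n → ℝ) :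
    ∀ z : Fin n → ℂ, (∀ i, ‖z i‖ = Real.exp (-(u i))) →
      ‖∏ i, (z i + ztilde u θ i)‖
          ≤ ‖∏ i, (ztilde u θ i + ztilde u θ i)‖ ∧
        (‖∏ i, (z i + ztilde u θ i)‖
            = ‖∏ i, (ztilde u θ i + ztilde u θ i)‖ → z = ztilde u θ) := by
  intro z hz
  have habs : ∀ i, ‖ztilde u θ i‖ = Real.exp (-(u i)) := by
    intro i
    simp [ztilde, Complex.norm_exp]
  have hfac : ∀ i, ‖z i + ztilde u θ i‖
      ≤ ‖ztilde u θ i + ztilde u θ i‖ := by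
    intro i
    calc ‖z i + ztilde u θ i‖
        ≤ ‖z i‖ + ‖ztilde u θ i‖ := norm_add_le _ _
      _ = ‖ztilde u θ i‖ + ‖ztilde u θ i‖ := by rw [hz i, habs i]
      _ = ‖ztilde u θ i + ztilde u θ i‖ := by
          rw [show ztilde u θ i + ztilde u θ i = 2 * ztilde u θ i from (two_mul _).symm,
            norm_mul, Complex.norm_two, two_mul]
  rw [norm_prod, norm_prod]
  refine ⟨Finset.prod_le_prod (fun i _ => norm_nonneg _) (fun i _ => hfac i), ?_⟩
  intro heq
  have hg : ∀ i, 0 < ‖ztilde u θ i + ztilde u θ i‖ := by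
    intro i
    rw [show ztilde u θ i + ztilde u θ i = 2 * ztilde u θ i from (two_mul _).symm,
      norm_mul, Complex.norm_two, habs i]
    positivity
  have := prod_eq_forall_eq _ _ (fun i => norm_nonneg _) hg hfac heq
  funext i
  have h2 : ‖z i + ztilde u θ i‖
      = ‖z i‖ + ‖ztilde u θ i‖ := by
    rw [this i, show ztilde u θ i + ztilde u θ i = 2 * ztilde u θ i from (two_mul _).symm,
      norm_mul, Complex.norm_two, hz i, habs i]
    ring
  have hsr : SameRay ℝ (z i) (ztilde u θ i) := sameRay_iff_norm_add.mpr h2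
  exact hsr.eq_of_norm_eq (by rw [hz i, habs i])
end
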